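/- Let $f \in L^2(\mathbb{R}^d)$ and for $n \in \mathbb{Z}$ let $E_n f$ denote the conditional expectation of $f$ onto the $\sigma$-algebra generated by dyadic cubes of side length $2^{-n}$, and set $df_n = E_n f - E_{n-1} f$. Let $M_k g(x) = \frac{1}{|B_k|}\int_{B_k} g(x+y)\, dy$ be the averaging operator over the ball $B_k$ of radius $2^{-k}$. Then for all $k \geq n$, $\|M_k (df_n) - df_n\|_{L^2}^2 \leq C_d\, 2^{n-k} \|df_n\|_{L^2}^2$, with $C_d$ depending only on $d$. -/

import Mathlib

open MeasureTheory
open scoped ENNReal NNReal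

/-- The dyadic cube of side length `2^(-n)` containing `x`. -/
def dyadicCubeOf (d : ℕ) (n : ℤ) (x : EuclideanSpace ℝ (Fin d)) :
    Set (EuclideanSpace ℝ (Fin d)) :=
  {y | ∀ i, ⌊(2:ℝ) ^ n * y i⌋ = ⌊(2:ℝ) ^ n * x i⌋}

/-- The dyadic conditional expectation at scale `2^(-n)`: the average of `f` over the
dyadic cube of side length `2^(-n)` containing `x`. -/
noncomputable def dyadicCondExp (d : ℕ) (n : ℤ) (f : EuclideanSpace ℝ (Fin d) → ℝ)
    (x : EuclideanSpace ℝ (Fin d)) : ℝ :=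
  ⨍ y in dyadicCubeOf d n x, f y

/-- The martingale difference `df_n = E_n f - E_{n-1} f`. -/
noncomputable def dyadicDiff (d : ℕ) (n : ℤ) (f : EuclideanSpace ℝ (Fin d) → ℝ)
    (x : EuclideanSpace ℝ (Fin d)) : ℝ :=
  dyadicCondExp d n f x - dyadicCondExp d (n - 1) f x

/-- The averaging operator over the ball of radius `2^(-k)`. -/
noncomputable def ballAvg (d : ℕ) (k : ℤ) (g : EuclideanSpace ℝ (Fin d) → ℝ)
    (x : EuclideanSpace ℝ (Fin d)) : ℝ :=
  ⨍ y in Metric.ball x ((2:ℝ) ^ (-k)), g y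

/-- The "bad" boundary layer set at scale `n` with margin `c`. -/
def badSet (d : ℕ) (n : ℤ) (c : ℝ) : Set (EuclideanSpace ℝ (Fin d)) :=
  {x | ∃ i, Int.fract ((2:ℝ)^n * x i) < c ∨ 1 - c < Int.fract ((2:ℝ)^n * x i)}

lemma coord_abs_le_norm {d : ℕ} (x : EuclideanSpace ℝ (Fin d)) (i : Fin d) :
    |x i| ≤ ‖x‖ := by
  rw [EuclideanSpace.norm_eq, ← Real.sqrt_sq_eq_abs]
  apply Real.sqrt_le_sqrt
  have := Finset.single_le_sum (f := fun j => ‖x j‖ ^ 2) (fun j _ => sq_nonneg _)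
    (Finset.mem_univ i)
  simpa [Real.norm_eq_abs, sq_abs] using this

lemma floor_half (s : ℝ) : ⌊s / 2⌋ = ⌊s⌋ / 2 := by
  have h1 : (⌊s⌋ : ℝ) ≤ s := Int.floor_le s
  have h2 : s < ⌊s⌋ + 1 := Int.lt_floor_add_one s
  have e := Int.mul_ediv_add_emod ⌊s⌋ 2
  have hm : ⌊s⌋ % 2 = 0 ∨ ⌊s⌋ % 2 = 1 := Int.emod_two_eq_zero_or_one ⌊s⌋
  rw [Int.floor_eq_iff]
  constructor
  · have : (2 * (⌊s⌋ / 2) : ℤ) ≤ ⌊s⌋ := by omega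
    have := (@Int.cast_le ℝ _ _ _).2 this
    push_cast at this
    linarith
  · have : (⌊s⌋ : ℤ) + 1 ≤ 2 * (⌊s⌋ / 2) + 2 := by omega
    have := (@Int.cast_le ℝ _ _ _).2 this
    push_cast at this
    linarith

lemma cube_eq_of_mem {d : ℕ} {n : ℤ} {x y : EuclideanSpace ℝ (Fin d)}
    (h : y ∈ dyadicCubeOf d n x) : dyadicCubeOf d n y = dyadicCubeOf d n x := by
  ext z
  simp only [dyadicCubeOf, Set.mem_setOf_eq]
  exact ⟨fun hz i => (hz i).trans (h i), fun hz i => (hz i).trans (h i).symm⟩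

lemma mem_cube_pred_of_mem {d : ℕ} {n : ℤ} {x y : EuclideanSpace ℝ (Fin d)}
    (h : y ∈ dyadicCubeOf d n x) : y ∈ dyadicCubeOf d (n - 1) x := by
  intro i
  have key : ∀ t : ℝ, (2:ℝ) ^ (n - 1) * t = (2:ℝ) ^ n * t / 2 := by
    intro t
    rw [zpow_sub₀ (two_ne_zero)]
    ring
  rw [key, key, floor_half, floor_half, h i]

lemma dyadicDiff_const_on {d : ℕ} {n : ℤ} (f : EuclideanSpace ℝ (Fin d) → ℝ)
    {x y : EuclideanSpace ℝ (Fin d)} (h : y ∈ dyadicCubeOf d n x) :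
    dyadicDiff d n f y = dyadicDiff d n f x := by
  unfold dyadicDiff dyadicCondExp
  rw [cube_eq_of_mem h, cube_eq_of_mem (mem_cube_pred_of_mem h)]

lemma measurable_dyadicCondExp (d : ℕ) (n : ℤ) (f : EuclideanSpace ℝ (Fin d) → ℝ) :
    Measurable (dyadicCondExp d n f) := by
  have hfv : Measurable fun x : EuclideanSpace ℝ (Fin d) =>
      (fun i => ⌊(2:ℝ) ^ n * x i⌋ : Fin d → ℤ) := by
    apply measurable_pi_lambda
    intro i
    exact Int.measurable_floor.comp (measurable_const.mul
      ((EuclideanSpace.proj i).continuous.measurable))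
  have : dyadicCondExp d n f
      = (fun m : Fin d → ℤ =>
          ⨍ y in {y : EuclideanSpace ℝ (Fin d) | ∀ i, ⌊(2:ℝ)^n * y i⌋ = m i}, f y)
        ∘ (fun x : EuclideanSpace ℝ (Fin d) => fun i => ⌊(2:ℝ) ^ n * x i⌋) := rfl
  rw [this]
  exact (measurable_of_countable _).comp hfv

lemma measurable_dyadicDiff (d : ℕ) (n : ℤ) (f : EuclideanSpace ℝ (Fin d) → ℝ) :
    Measurable (dyadicDiff d n f) :=
  (measurable_dyadicCondExp d n f).sub (measurable_dyadicCondExp d (n-1) f)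

lemma euclid_vol_pi {d : ℕ} (S : Fin d → Set ℝ) (hS : ∀ i, MeasurableSet (S i)) :
    volume {y : EuclideanSpace ℝ (Fin d) | ∀ i, y i ∈ S i} = ∏ i, volume (S i) := by
  have hp : MeasurableSet (Set.univ.pi S) := MeasurableSet.univ_pi hS
  have h1 : {y : EuclideanSpace ℝ (Fin d) | ∀ i, y i ∈ S i}
      = (MeasurableEquiv.toLp 2 (Fin d → ℝ)).symm ⁻¹' (Set.univ.pi S) := by
    ext y
    simp [Set.mem_univ_pi]
  rw [h1, (EuclideanSpace.volume_preserving_symm_measurableEquiv_toLp (Fin d)).measure_preimage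
    hp.nullMeasurableSet, volume_pi_pi]

lemma euclid_meas_pi {d : ℕ} (S : Fin d → Set ℝ) (hS : ∀ i, MeasurableSet (S i)) :
    MeasurableSet {y : EuclideanSpace ℝ (Fin d) | ∀ i, y i ∈ S i} := by
  have : {y : EuclideanSpace ℝ (Fin d) | ∀ i, y i ∈ S i}
      = ⋂ i, (fun y : EuclideanSpace ℝ (Fin d) => y i) ⁻¹' (S i) := by ext y; simp
  rw [this]
  exact MeasurableSet.iInter fun i => (EuclideanSpace.proj i).continuous.measurable (hS i)

lemma measurable_badSet (d : ℕ) (n : ℤ) (c : ℝ) : MeasurableSet (badSet d n c) := by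
  have : badSet d n c = ⋃ i, ((fun x : EuclideanSpace ℝ (Fin d) =>
      Int.fract ((2:ℝ)^n * x i)) ⁻¹' (Set.Iio c ∪ Set.Ioi (1 - c))) := by
    ext x
    simp only [badSet, Set.mem_setOf_eq, Set.mem_iUnion, Set.mem_preimage, Set.mem_union,
      Set.mem_Iio, Set.mem_Ioi]
  rw [this]
  refine MeasurableSet.iUnion fun i => ?_
  exact (measurable_fract.comp (measurable_const.mul
    (EuclideanSpace.proj i).continuous.measurable)) (measurableSet_Iio.union measurableSet_Ioi)

lemma cube_eq_box {d : ℕ} (n : ℤ) (x : EuclideanSpace ℝ (Fin d)) :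
    dyadicCubeOf d n x =
      {y : EuclideanSpace ℝ (Fin d) | ∀ i,
        y i ∈ Set.Ico ((⌊(2:ℝ)^n * x i⌋ : ℝ) / 2^n) ((⌊(2:ℝ)^n * x i⌋ + 1 : ℝ) / 2^n)} := by
  ext y
  simp only [dyadicCubeOf, Set.mem_setOf_eq, Set.mem_Ico]
  refine forall_congr' fun i => ?_
  rw [Int.floor_eq_iff, div_le_iff₀ (zpow_pos two_pos n), lt_div_iff₀ (zpow_pos two_pos n)]
  constructor
  · rintro ⟨h1, h2⟩
    exact ⟨by linarith [mul_comm ((2:ℝ)^n) (y i)], by linarith [mul_comm ((2:ℝ)^n) (y i)]⟩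
  · rintro ⟨h1, h2⟩
    exact ⟨by linarith [mul_comm ((2:ℝ)^n) (y i)], by linarith [mul_comm ((2:ℝ)^n) (y i)]⟩

lemma measurable_cube {d : ℕ} (n : ℤ) (x : EuclideanSpace ℝ (Fin d)) :
    MeasurableSet (dyadicCubeOf d n x) := by
  rw [cube_eq_box]
  exact euclid_meas_pi _ fun i => measurableSet_Ico

lemma volume_cube {d : ℕ} (n : ℤ) (x : EuclideanSpace ℝ (Fin d)) :
    volume (dyadicCubeOf d n x) = ENNReal.ofReal ((2:ℝ)^(-n)) ^ d := by
  rw [cube_eq_box, euclid_vol_pi _ fun i => measurableSet_Ico]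
  have : ∀ i : Fin d, volume (Set.Ico ((⌊(2:ℝ)^n * x i⌋ : ℝ) / 2^n)
      ((⌊(2:ℝ)^n * x i⌋ + 1 : ℝ) / 2^n)) = ENNReal.ofReal ((2:ℝ)^(-n)) := by
    intro i
    rw [Real.volume_Ico]
    congr 1
    rw [zpow_neg]
    field_simp
    ring
  simp only [this, Finset.prod_const, Finset.card_univ, Fintype.card_fin]

lemma mem_cube_comm {d : ℕ} {n : ℤ} {x z : EuclideanSpace ℝ (Fin d)} :
    z ∈ dyadicCubeOf d n x ↔ x ∈ dyadicCubeOf d n z :=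
  ⟨fun h i => (h i).symm, fun h i => (h i).symm⟩

lemma coord_close {d : ℕ} (n : ℤ) {x y : EuclideanSpace ℝ (Fin d)} {r ε : ℝ}
    (h : dist y x < r) (hr : (2:ℝ)^n * r ≤ ε) (i : Fin d) :
    |(2:ℝ)^n * y i - (2:ℝ)^n * x i| < ε := by
  have h1 : |y i - x i| ≤ dist y x := by
    rw [dist_eq_norm]
    exact coord_abs_le_norm (y - x) i
  have h2 : (2:ℝ)^n * |y i - x i| < (2:ℝ)^n * r :=
    mul_lt_mul_of_pos_left (lt_of_le_of_lt h1 h) (zpow_pos two_pos n)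
  calc |(2:ℝ)^n * y i - (2:ℝ)^n * x i| = (2:ℝ)^n * |y i - x i| := by
        rw [← mul_sub, abs_mul, abs_of_pos (zpow_pos two_pos n)]
    _ < ε := lt_of_lt_of_le h2 hr

lemma mem_cube_of_not_bad {d : ℕ} {n : ℤ} {ε r : ℝ} {x y : EuclideanSpace ℝ (Fin d)}
    (hx : x ∉ badSet d n ε) (h : dist y x < r) (hr : (2:ℝ)^n * r ≤ ε) :
    y ∈ dyadicCubeOf d n x := by
  intro i
  simp only [badSet, Set.mem_setOf_eq, not_exists, not_or, not_lt] at hx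
  obtain ⟨h1, h2⟩ := hx i
  set t := (2:ℝ)^n * x i with ht
  set s := (2:ℝ)^n * y i with hs
  have hst : |s - t| < ε := coord_close n h hr i
  rw [abs_sub_lt_iff] at hst
  have hfl : (⌊t⌋ : ℝ) + Int.fract t = t := Int.floor_add_fract t
  rw [Int.floor_eq_iff]
  constructor
  · linarith [hst.2]
  · push_cast
    linarith [hst.1]

lemma bad_of_close {d : ℕ} {n : ℤ} {ε r : ℝ} {x z : EuclideanSpace ℝ (Fin d)}
    (hx : x ∈ badSet d n ε) (h : dist x z < r) (hr : (2:ℝ)^n * r ≤ ε) :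
    z ∈ badSet d n (2*ε) := by
  obtain ⟨i, hi⟩ := hx
  refine ⟨i, ?_⟩
  set t := (2:ℝ)^n * x i with ht
  set s := (2:ℝ)^n * z i with hs
  have hst : |t - s| < ε := coord_close n h hr i
  rw [abs_sub_lt_iff] at hst
  by_cases h2e : 1 < 2*ε
  · right
    have := Int.fract_nonneg s
    linarith
  push_neg at h2e
  have hfl : (⌊t⌋ : ℝ) + Int.fract t = t := Int.floor_add_fract t
  have hf0 : 0 ≤ Int.fract t := Int.fract_nonneg t
  have hf1 : Int.fract t < 1 := Int.fract_lt_one t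
  rcases hi with hlo | hhi
  · by_cases hcase : s < (⌊t⌋ : ℝ)
    · right
      have hfloor : ⌊s⌋ = ⌊t⌋ - 1 := by
        rw [Int.floor_eq_iff]
        push_cast
        constructor <;> [linarith [hst.1]; linarith]
      rw [Int.fract, hfloor]
      push_cast
      linarith [hst.1]
    · left
      push_neg at hcase
      have hfloor : ⌊s⌋ = ⌊t⌋ := by
        rw [Int.floor_eq_iff]
        constructor <;> [linarith; linarith [hst.1]]
      rw [Int.fract, hfloor]
      linarith [hst.1]
  · by_cases hcase : s < (⌊t⌋ : ℝ) + 1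
    · right
      have hfloor : ⌊s⌋ = ⌊t⌋ := by
        rw [Int.floor_eq_iff]
        constructor <;> [linarith [hst.1]; linarith]
      rw [Int.fract, hfloor]
      linarith [hst.1]
    · left
      push_neg at hcase
      have hfloor : ⌊s⌋ = ⌊t⌋ + 1 := by
        rw [Int.floor_eq_iff]
        push_cast
        constructor <;> [linarith; linarith [hst.1]]
      rw [Int.fract, hfloor]
      push_cast
      linarith [hst.1]

lemma badSet_mono {d : ℕ} {n : ℤ} {c c' : ℝ} (h : c ≤ c') :
    badSet d n c ⊆ badSet d n c' := by
  rintro x ⟨i, hi⟩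
  refine ⟨i, ?_⟩
  rcases hi with h1 | h1
  · exact Or.inl (lt_of_lt_of_le h1 h)
  · exact Or.inr (by linarith)

lemma volume_bad_inter_cube {d : ℕ} (n : ℤ) (c : ℝ) (hc : 0 ≤ c)
    (z : EuclideanSpace ℝ (Fin d)) :
    volume (badSet d n c ∩ dyadicCubeOf d n z) ≤
      (d : ℝ≥0∞) * (ENNReal.ofReal (2*c) * ENNReal.ofReal ((2:ℝ)^(-n)) ^ d) := by
  set Tbad : Set ℝ := {t | Int.fract ((2:ℝ)^n * t) < c ∨ 1 - c < Int.fract ((2:ℝ)^n * t)}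
    with hTbad
  have hTbadMeas : MeasurableSet Tbad := by
    have : Tbad = (fun t : ℝ => Int.fract ((2:ℝ)^n * t)) ⁻¹' (Set.Iio c ∪ Set.Ioi (1 - c)) := by
      ext t; simp [hTbad]
    rw [this]
    exact (measurable_fract.comp (measurable_const.mul measurable_id))
      (measurableSet_Iio.union measurableSet_Ioi)
  set box : Fin d → Set ℝ := fun j =>
    Set.Ico ((⌊(2:ℝ)^n * z j⌋ : ℝ) / 2^n) ((⌊(2:ℝ)^n * z j⌋ + 1 : ℝ) / 2^n) with hbox
  set T : Fin d → Fin d → Set ℝ := fun i j => if j = i then box j ∩ Tbad else box j with hT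
  have hTmeas : ∀ i j, MeasurableSet (T i j) := by
    intro i j
    simp only [hT, hbox]
    split
    · exact measurableSet_Ico.inter hTbadMeas
    · exact measurableSet_Ico
  have hincl : badSet d n c ∩ dyadicCubeOf d n z ⊆
      ⋃ i, {y : EuclideanSpace ℝ (Fin d) | ∀ j, y j ∈ T i j} := by
    rintro y ⟨⟨i, hi⟩, hcube⟩
    rw [cube_eq_box] at hcube
    refine Set.mem_iUnion.2 ⟨i, fun j => ?_⟩
    by_cases h : j = i
    · subst h
      simp only [hT, if_pos rfl]
      exact ⟨hcube j, by simpa [hTbad] using hi⟩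
    · simp only [hT, if_neg h]
      exact hcube j
  have hsmall : ∀ j : Fin d, volume (box j ∩ Tbad) ≤
      ENNReal.ofReal (2*c) * ENNReal.ofReal ((2:ℝ)^(-n)) := by
    intro j
    set m : ℤ := ⌊(2:ℝ)^n * z j⌋ with hm
    set a : ℝ := (m : ℝ) / 2^n with ha
    have h2n : (0:ℝ) < 2^n := zpow_pos two_pos n
    have hsub : box j ∩ Tbad ⊆
        Set.Ico a (a + c * 2^(-n)) ∪ Set.Ioo (a + 2^(-n) - c * 2^(-n)) (a + 2^(-n)) := by
      rintro t ⟨⟨ht1, ht2⟩, htb⟩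
      have hta : a ≤ t := ht1
      have htb' : t < a + 2^(-n) := by
        have : ((m:ℝ) + 1) / 2^n = a + 2^(-n) := by rw [ha, zpow_neg]; field_simp
        rw [← this]; exact ht2
      have hfloor : ⌊(2:ℝ)^n * t⌋ = m := by
        rw [Int.floor_eq_iff]
        constructor
        · calc (m:ℝ) = 2^n * a := by rw [ha]; field_simp
            _ ≤ 2^n * t := by nlinarith
        · push_cast
          calc (2:ℝ)^n * t < 2^n * (a + 2^(-n)) := by nlinarith
            _ = m + 1 := by rw [ha, zpow_neg]; field_simp
      have hfract : Int.fract ((2:ℝ)^n * t) = 2^n * t - m := by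
        rw [Int.fract, hfloor]
      rcases htb with hlt | hgt
      · left
        refine ⟨hta, ?_⟩
        rw [hfract] at hlt
        have : (2:ℝ)^n * t < m + c := by linarith
        have ha' : a + c * 2^(-n) = ((m:ℝ) + c)/2^n := by rw [ha, zpow_neg]; field_simp
        rw [ha', lt_div_iff₀ h2n]
        linarith [mul_comm ((2:ℝ)^n) t]
      · right
        refine ⟨?_, htb'⟩
        rw [hfract] at hgt
        have : (m:ℝ) + 1 - c < 2^n * t := by linarith
        have ha' : a + 2^(-n) - c * 2^(-n) = ((m:ℝ) + 1 - c)/2^n := by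
          rw [ha, zpow_neg]; field_simp
        rw [ha', div_lt_iff₀ h2n]
        linarith [mul_comm ((2:ℝ)^n) t]
    calc volume (box j ∩ Tbad) ≤
        volume (Set.Ico a (a + c * 2^(-n)) ∪ Set.Ioo (a + 2^(-n) - c * 2^(-n)) (a + 2^(-n))) :=
          measure_mono hsub
      _ ≤ volume (Set.Ico a (a + c * 2^(-n))) +
            volume (Set.Ioo (a + 2^(-n) - c * 2^(-n)) (a + 2^(-n))) := measure_union_le _ _
      _ = ENNReal.ofReal (c * 2^(-n)) + ENNReal.ofReal (c * 2^(-n)) := by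
          have e1 : a + c * 2^(-n) - a = c * 2^(-n) := by ring
          have e2 : a + 2^(-n) - (a + 2^(-n) - c * 2^(-n)) = c * 2^(-n) := by ring
          rw [Real.volume_Ico, Real.volume_Ioo, e1, e2]
      _ = ENNReal.ofReal (2*c) * ENNReal.ofReal ((2:ℝ)^(-n)) := by
          rw [← ENNReal.ofReal_add (by positivity) (by positivity),
            ← ENNReal.ofReal_mul (by positivity)]
          congr 1
          ring
  have hvolSi : ∀ i : Fin d, volume {y : EuclideanSpace ℝ (Fin d) | ∀ j, y j ∈ T i j} ≤
      ENNReal.ofReal (2*c) * ENNReal.ofReal ((2:ℝ)^(-n)) ^ d := by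
    intro i
    rw [euclid_vol_pi _ (hTmeas i)]
    rw [← Finset.mul_prod_erase Finset.univ _ (Finset.mem_univ i)]
    have h1 : volume (T i i) ≤ ENNReal.ofReal (2*c) * ENNReal.ofReal ((2:ℝ)^(-n)) := by
      simp only [hT, if_pos rfl]
      exact hsmall i
    have h2 : ∀ j ∈ Finset.univ.erase i, volume (T i j) = ENNReal.ofReal ((2:ℝ)^(-n)) := by
      intro j hj
      have hji : j ≠ i := (Finset.mem_erase.1 hj).1
      simp only [hT, if_neg hji, hbox]
      rw [Real.volume_Ico]
      congr 1
      rw [zpow_neg]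
      field_simp
      ring
    rw [Finset.prod_congr rfl h2, Finset.prod_const]
    have hcard : (Finset.univ.erase i).card = d - 1 := by
      rw [Finset.card_erase_of_mem (Finset.mem_univ i), Finset.card_univ, Fintype.card_fin]
    rw [hcard]
    calc volume (T i i) * ENNReal.ofReal ((2:ℝ)^(-n)) ^ (d-1)
        ≤ (ENNReal.ofReal (2*c) * ENNReal.ofReal ((2:ℝ)^(-n))) *
            ENNReal.ofReal ((2:ℝ)^(-n)) ^ (d-1) := mul_le_mul_left h1 _
      _ = ENNReal.ofReal (2*c) * ENNReal.ofReal ((2:ℝ)^(-n)) ^ d := by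
          rw [mul_assoc]
          congr 1
          rw [← pow_succ']
          congr 1
          have : 0 < d := i.pos
          omega
  calc volume (badSet d n c ∩ dyadicCubeOf d n z)
      ≤ volume (⋃ i, {y : EuclideanSpace ℝ (Fin d) | ∀ j, y j ∈ T i j}) := measure_mono hincl
    _ ≤ ∑' i : Fin d, volume {y : EuclideanSpace ℝ (Fin d) | ∀ j, y j ∈ T i j} :=
        measure_iUnion_le _
    _ ≤ ∑' _i : Fin d, ENNReal.ofReal (2*c) * ENNReal.ofReal ((2:ℝ)^(-n)) ^ d := by
        rw [tsum_fintype, tsum_fintype]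
        exact Finset.sum_le_sum fun i _ => hvolSi i
    _ = (d : ℝ≥0∞) * (ENNReal.ofReal (2*c) * ENNReal.ofReal ((2:ℝ)^(-n)) ^ d) := by
        rw [tsum_fintype, Finset.sum_const, Finset.card_univ, Fintype.card_fin, nsmul_eq_mul]

lemma eLpNorm_two_sq {α : Type*} [MeasurableSpace α] (μ : Measure α) (h : α → ℝ) :
    eLpNorm h 2 μ ^ 2 = ∫⁻ x, ENNReal.ofReal (h x ^ 2) ∂μ := by
  rw [eLpNorm_eq_lintegral_rpow_enorm_toReal two_ne_zero ENNReal.ofNat_ne_top]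
  have htr : (2:ℝ≥0∞).toReal = 2 := by simp
  rw [htr]
  have hpt : ∀ x, ((‖h x‖₊ : ℝ≥0∞)) ^ (2:ℝ) = ENNReal.ofReal (h x ^ 2) := by
    intro x
    rw [← enorm_eq_nnnorm, Real.enorm_eq_ofReal_abs,
      ENNReal.ofReal_rpow_of_nonneg (abs_nonneg _) (by norm_num : (0:ℝ) ≤ 2)]
    congr 1
    rw [show (2:ℝ) = ((2:ℕ):ℝ) by norm_num, Real.rpow_natCast, sq_abs]
  calc ((∫⁻ x, (‖h x‖₊ : ℝ≥0∞) ^ (2:ℝ) ∂μ) ^ (1/(2:ℝ))) ^ 2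
      = ((∫⁻ x, (‖h x‖₊ : ℝ≥0∞) ^ (2:ℝ) ∂μ) ^ (1/(2:ℝ))) ^ (2:ℝ) := by
        rw [← ENNReal.rpow_natCast]; norm_num
    _ = (∫⁻ x, (‖h x‖₊ : ℝ≥0∞) ^ (2:ℝ) ∂μ) ^ ((1/(2:ℝ)) * 2) := by
        rw [← ENNReal.rpow_mul]
    _ = ∫⁻ x, (‖h x‖₊ : ℝ≥0∞) ^ (2:ℝ) ∂μ := by norm_num
    _ = ∫⁻ x, ENNReal.ofReal (h x ^ 2) ∂μ := by
        congr 1; funext x; exact hpt x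

/-- For `k ≥ n`, `‖M_k(df_n) - df_n‖₂² ≤ C_d 2^{n-k} ‖df_n‖₂²`. -/
theorem ballAvg_martingale_diff_near_diagonal (d : ℕ) :
    ∃ C : ℝ, 0 < C ∧ ∀ (f : EuclideanSpace ℝ (Fin d) → ℝ), MemLp f 2 volume →
      ∀ (n k : ℤ), n ≤ k →
      eLpNorm (fun x => ballAvg d k (dyadicDiff d n f) x - dyadicDiff d n f x) 2 volume ^ 2
        ≤ ENNReal.ofReal (C * (2:ℝ) ^ (n - k)) *
            eLpNorm (dyadicDiff d n f) 2 volume ^ 2 := by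
  refine ⟨16 * ((d:ℝ) + 1), by positivity, ?_⟩
  intro f hf n k hnk
  set g : EuclideanSpace ℝ (Fin d) → ℝ := dyadicDiff d n f with hg
  by_cases htop : eLpNorm g 2 volume = ∞
  · rw [htop]
    have h1 : ENNReal.ofReal ((16 * ((d:ℝ)+1)) * (2:ℝ) ^ (n - k)) ≠ 0 := by
      rw [Ne, ENNReal.ofReal_eq_zero, not_le]
      positivity
    rw [ENNReal.top_pow (by norm_num), ENNReal.mul_top h1]
    exact le_top
  have hgm : Measurable g := measurable_dyadicDiff d n f
  have hg2 : MemLp g 2 volume := ⟨hgm.aestronglyMeasurable, lt_top_iff_ne_top.2 htop⟩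
  set r : ℝ := (2:ℝ)^(-k) with hr
  set ε : ℝ := (2:ℝ)^(n-k) with hε
  have hε0 : 0 < ε := zpow_pos two_pos _
  have hε2 : (2:ℝ)^n * r ≤ ε := by
    rw [hr, hε, ← zpow_add₀ (two_ne_zero : (2:ℝ) ≠ 0), sub_eq_add_neg]
  have hr0 : 0 < r := zpow_pos two_pos _
  set G : EuclideanSpace ℝ (Fin d) → ℝ≥0∞ := fun z => ENNReal.ofReal (g z ^ 2) with hG
  have hGmeas : Measurable G := ENNReal.measurable_ofReal.comp (hgm.pow_const 2)
  set v : ℝ≥0∞ := volume (Metric.ball (0 : EuclideanSpace ℝ (Fin d)) r) with hv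
  have hv0 : v ≠ 0 := (Metric.measure_ball_pos volume 0 hr0).ne'
  have hvtop : v ≠ ∞ := measure_ball_lt_top.ne
  have hvball : ∀ x : EuclideanSpace ℝ (Fin d), volume (Metric.ball x r) = v := fun x =>
    Measure.addHaar_ball_center volume x r
  set Bε : Set (EuclideanSpace ℝ (Fin d)) := badSet d n ε with hBε
  set B2ε : Set (EuclideanSpace ℝ (Fin d)) := badSet d n (2*ε) with hB2ε
  set w : ℝ≥0∞ := ENNReal.ofReal ((2:ℝ)^(-n)) ^ d with hw
  have hw0 : w ≠ 0 := by
    apply pow_ne_zero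
    rw [Ne, ENNReal.ofReal_eq_zero, not_le]
    positivity
  have hwtop : w ≠ ∞ := by
    apply ENNReal.pow_ne_top
    exact ENNReal.ofReal_ne_top
  set K : EuclideanSpace ℝ (Fin d) → ℝ≥0∞ := fun x => ∫⁻ z in Metric.ball x r, G z with hK
  -- pointwise bound
  have hpt : ∀ x, ENNReal.ofReal ((ballAvg d k g x - g x)^2)
      ≤ Bε.indicator (fun x => 2 * (v⁻¹ * K x + G x)) x := by
    intro x
    by_cases hxb : x ∈ Bε
    · rw [Set.indicator_of_mem hxb]
      set μb : Measure (EuclideanSpace ℝ (Fin d)) := volume.restrict (Metric.ball x r) with hμb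
      haveI : IsFiniteMeasure μb :=
        ⟨by rw [hμb, Measure.restrict_apply_univ]; exact measure_ball_lt_top⟩
      haveI : NeZero μb := ⟨Measure.measure_univ_ne_zero.1
        (by rw [hμb, Measure.restrict_apply_univ]; exact (Metric.measure_ball_pos volume x hr0).ne')⟩
      have hint : Integrable g μb := (hg2.restrict _).integrable one_le_two
      have hint2 : Integrable (fun y => g y ^ 2) μb := (hg2.restrict _).integrable_sq
      have hballavg : ballAvg d k g x = ⨍ y, g y ∂μb := rfl
      have hJen : (⨍ y, g y ∂μb) ^ 2 ≤ ⨍ y, g y ^ 2 ∂μb := by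
        have hcv : ConvexOn ℝ Set.univ fun t : ℝ => t ^ 2 := Even.convexOn_pow even_two
        have := hcv.map_average_le (f := g) (μ := μb) ((continuous_pow 2).continuousOn)
          isClosed_univ (Filter.Eventually.of_forall fun _ => Set.mem_univ _) hint
          hint2
        simpa using this
      have hsq : (ballAvg d k g x - g x)^2 ≤ 2 * (⨍ y, g y ^ 2 ∂μb) + 2 * g x ^ 2 := by
        rw [hballavg]
        nlinarith [hJen, sq_nonneg ((⨍ y, g y ∂μb) + g x)]
      have hAvg : ENNReal.ofReal (⨍ y, g y ^ 2 ∂μb) ≤ v⁻¹ * K x := by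
        have h1 : (⨍ y, g y ^ 2 ∂μb) = (volume (Metric.ball x r)).toReal⁻¹ *
            ∫ y, g y ^ 2 ∂μb := by
          rw [hμb]
          rw [setAverage_eq (μ := volume) (fun y => g y ^ 2) (Metric.ball x r), smul_eq_mul]
          rfl
        have h2 : ∫ y, g y ^ 2 ∂μb = (K x).toReal := by
          rw [hK, integral_eq_lintegral_of_nonneg_ae
            (Filter.Eventually.of_forall fun y => sq_nonneg _)
            ((hgm.pow_const 2).aestronglyMeasurable)]
        rw [h1, h2, hvball x, ENNReal.ofReal_mul (inv_nonneg.2 ENNReal.toReal_nonneg)]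
        have h3 : ENNReal.ofReal v.toReal⁻¹ = v⁻¹ := by
          rw [← ENNReal.toReal_inv, ENNReal.ofReal_toReal (ENNReal.inv_ne_top.2 hv0)]
        rw [h3]
        exact mul_le_mul' le_rfl ENNReal.ofReal_toReal_le
      calc ENNReal.ofReal ((ballAvg d k g x - g x)^2)
          ≤ ENNReal.ofReal (2 * (⨍ y, g y ^ 2 ∂μb) + 2 * g x ^ 2) :=
            ENNReal.ofReal_le_ofReal hsq
        _ ≤ ENNReal.ofReal (2 * (⨍ y, g y ^ 2 ∂μb)) + ENNReal.ofReal (2 * g x ^ 2) :=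
            ENNReal.ofReal_add_le
        _ = 2 * ENNReal.ofReal (⨍ y, g y ^ 2 ∂μb) + 2 * ENNReal.ofReal (g x ^ 2) := by
            rw [ENNReal.ofReal_mul (by norm_num : (0:ℝ) ≤ 2),
              ENNReal.ofReal_mul (by norm_num : (0:ℝ) ≤ 2), ENNReal.ofReal_ofNat]
        _ ≤ 2 * (v⁻¹ * K x) + 2 * G x :=
            add_le_add (mul_le_mul' le_rfl hAvg) le_rfl
        _ = 2 * (v⁻¹ * K x + G x) := by ring
    · rw [Set.indicator_of_notMem hxb]
      have hcube : ∀ y ∈ Metric.ball x r, g y = g x := fun y hy =>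
        dyadicDiff_const_on f (mem_cube_of_not_bad hxb (Metric.mem_ball.1 hy) hε2)
      have havg : ballAvg d k g x = g x := by
        have h1 : (⨍ y in Metric.ball x r, g y) = ⨍ _y in Metric.ball x r, g x :=
          setAverage_congr_fun measurableSet_ball (Filter.Eventually.of_forall hcube)
        have h2 : ballAvg d k g x = ⨍ y in Metric.ball x r, g y := rfl
        rw [h2, h1, setAverage_const (Metric.measure_ball_pos volume x hr0).ne'
          measure_ball_lt_top.ne]
      rw [havg, sub_self]
      simp
  -- measurability of kernels
  have hSball : MeasurableSet {p : EuclideanSpace ℝ (Fin d) × EuclideanSpace ℝ (Fin d) |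
      dist p.2 p.1 < r} := by
    have : {p : EuclideanSpace ℝ (Fin d) × EuclideanSpace ℝ (Fin d) | dist p.2 p.1 < r}
        = (fun p : EuclideanSpace ℝ (Fin d) × EuclideanSpace ℝ (Fin d) => dist p.2 p.1) ⁻¹'
          (Set.Iio r) := rfl
    rw [this]
    exact (measurable_snd.dist measurable_fst) measurableSet_Iio
  have hFball : Measurable (Function.uncurry fun x z =>
      (Metric.ball x r).indicator G z) := by
    have heq : (Function.uncurry fun x z => (Metric.ball x r).indicator G z)
        = ({p : EuclideanSpace ℝ (Fin d) × EuclideanSpace ℝ (Fin d) |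
            dist p.2 p.1 < r}).indicator (fun p => G p.2) := by
      funext p
      rcases p with ⟨x, z⟩
      by_cases h : dist z x < r <;>
        simp [Function.uncurry, Set.indicator_apply, Metric.mem_ball, h]
    rw [heq]
    exact (hGmeas.comp measurable_snd).indicator hSball
  have hKmeas : Measurable K := by
    have hKeq : K = fun x => ∫⁻ z, (Metric.ball x r).indicator G z := by
      funext x
      simp only [hK]
      rw [← lintegral_indicator measurableSet_ball]
    rw [hKeq]
    exact Measurable.lintegral_prod_right hFball
  -- cube kernel
  have hScube : MeasurableSet {p : EuclideanSpace ℝ (Fin d) × EuclideanSpace ℝ (Fin d) |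
      p.2 ∈ dyadicCubeOf d n p.1} := by
    have : {p : EuclideanSpace ℝ (Fin d) × EuclideanSpace ℝ (Fin d) |
        p.2 ∈ dyadicCubeOf d n p.1}
        = ⋂ i, (fun p : EuclideanSpace ℝ (Fin d) × EuclideanSpace ℝ (Fin d) =>
            (⌊(2:ℝ)^n * p.2 i⌋ - ⌊(2:ℝ)^n * p.1 i⌋ : ℤ)) ⁻¹' {0} := by
      ext p
      simp only [dyadicCubeOf, Set.mem_setOf_eq, Set.mem_iInter, Set.mem_preimage,
        Set.mem_singleton_iff, sub_eq_zero]
    rw [this]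
    refine MeasurableSet.iInter fun i => ?_
    have hm2 : ∀ (q : EuclideanSpace ℝ (Fin d) × EuclideanSpace ℝ (Fin d) →
        EuclideanSpace ℝ (Fin d)), Measurable q → Measurable (fun p => ⌊(2:ℝ)^n * q p i⌋) :=
      fun q hq => Int.measurable_floor.comp (measurable_const.mul
        ((EuclideanSpace.proj i).continuous.measurable.comp hq))
    exact ((hm2 _ measurable_snd).sub (hm2 _ measurable_fst)) (measurableSet_singleton 0)
  have hFcube : Measurable (Function.uncurry fun x z =>
      (dyadicCubeOf d n x).indicator G z) := by
    have heq : (Function.uncurry fun x z => (dyadicCubeOf d n x).indicator G z)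
        = ({p : EuclideanSpace ℝ (Fin d) × EuclideanSpace ℝ (Fin d) |
            p.2 ∈ dyadicCubeOf d n p.1}).indicator (fun p => G p.2) := by
      funext p
      rcases p with ⟨x, z⟩
      by_cases h : z ∈ dyadicCubeOf d n x <;>
        simp [Function.uncurry, Set.indicator_apply, h]
    rw [heq]
    exact (hGmeas.comp measurable_snd).indicator hScube
  have hCmeas : Measurable fun x => ∫⁻ z, (dyadicCubeOf d n x).indicator G z :=
    Measurable.lintegral_prod_right hFcube
  -- Tonelli 1
  have hT1 : ∫⁻ x in Bε, K x ≤ v * ∫⁻ z in B2ε, G z := by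
    have heq1 : ∫⁻ x in Bε, K x
        = ∫⁻ z, ∫⁻ x in Bε, (Metric.ball x r).indicator G z := by
      rw [← lintegral_lintegral_swap (hFball.aemeasurable)]
      refine lintegral_congr fun x => ?_
      simp only [hK]
      rw [← lintegral_indicator measurableSet_ball]
    have heq2 : ∀ z, (∫⁻ x in Bε, (Metric.ball x r).indicator G z)
        = G z * volume (Metric.ball z r ∩ Bε) := by
      intro z
      have hpt2 : ∀ x, (Metric.ball x r).indicator G z
          = (Metric.ball z r).indicator (fun _ => G z) x := by
        intro x
        by_cases h : dist z x < r
        · rw [Set.indicator_of_mem (Metric.mem_ball.2 h),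
            Set.indicator_of_mem (Metric.mem_ball.2 (by rwa [dist_comm]))]
        · rw [Set.indicator_of_notMem (fun hc => h (Metric.mem_ball.1 hc)),
            Set.indicator_of_notMem (fun hc => h (by rw [dist_comm]; exact Metric.mem_ball.1 hc))]
      calc (∫⁻ x in Bε, (Metric.ball x r).indicator G z)
          = ∫⁻ x in Bε, (Metric.ball z r).indicator (fun _ => G z) x := by
            exact lintegral_congr fun x => hpt2 x
        _ = ∫⁻ x in Metric.ball z r, G z ∂(volume.restrict Bε) := by
            rw [lintegral_indicator measurableSet_ball]
        _ = G z * (volume.restrict Bε) (Metric.ball z r) := setLIntegral_const _ _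
        _ = G z * volume (Metric.ball z r ∩ Bε) := by
            rw [Measure.restrict_apply measurableSet_ball]
    have hbound : ∀ z, G z * volume (Metric.ball z r ∩ Bε)
        ≤ G z * (B2ε.indicator (fun _ => v) z) := by
      intro z
      refine mul_le_mul' le_rfl ?_
      by_cases hz : z ∈ B2ε
      · rw [Set.indicator_of_mem hz]
        exact le_trans (measure_mono Set.inter_subset_left) (le_of_eq (hvball z))
      · rw [Set.indicator_of_notMem hz]
        have hempty : Metric.ball z r ∩ Bε = ∅ := by
          rw [Set.eq_empty_iff_forall_notMem]
          rintro x ⟨hx1, hx2⟩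
          exact hz (bad_of_close hx2 (Metric.mem_ball.1 hx1) hε2)
        rw [hempty]
        simp
    calc ∫⁻ x in Bε, K x = ∫⁻ z, G z * volume (Metric.ball z r ∩ Bε) := by
          rw [heq1]; exact lintegral_congr heq2
      _ ≤ ∫⁻ z, G z * (B2ε.indicator (fun _ => v) z) := lintegral_mono hbound
      _ = ∫⁻ z, B2ε.indicator (fun z => v * G z) z := by
          refine lintegral_congr fun z => ?_
          by_cases hz : z ∈ B2ε <;>
            simp [Set.indicator_apply, hz, mul_comm]
      _ = ∫⁻ z in B2ε, v * G z := lintegral_indicator (measurable_badSet d n (2*ε)) _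
      _ = v * ∫⁻ z in B2ε, G z := lintegral_const_mul v hGmeas
  -- Tonelli 2
  have hGconst : ∀ x, ∀ z ∈ dyadicCubeOf d n x, G z = G x := by
    intro x z hz
    simp only [hG]
    rw [hg, dyadicDiff_const_on f hz]
  have hGcube : ∀ x, ∫⁻ z in dyadicCubeOf d n x, G z = G x * w := by
    intro x
    rw [setLIntegral_congr_fun (measurable_cube n x)
      (fun z hz => hGconst x z hz), setLIntegral_const,
      volume_cube]
  have hGrep : ∀ x, G x = w⁻¹ * ∫⁻ z in dyadicCubeOf d n x, G z := by
    intro x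
    rw [hGcube x, mul_comm w⁻¹, mul_assoc, ENNReal.mul_inv_cancel hw0 hwtop, mul_one]
  have hT2 : ∫⁻ x in B2ε, G x
      ≤ (d : ℝ≥0∞) * ENNReal.ofReal (2*(2*ε)) * ∫⁻ z, G z := by
    have heq1 : ∫⁻ x in B2ε, G x
        = w⁻¹ * ∫⁻ z, ∫⁻ x in B2ε, (dyadicCubeOf d n x).indicator G z := by
      rw [← lintegral_lintegral_swap (hFcube.aemeasurable)]
      rw [← lintegral_const_mul w⁻¹ hCmeas]
      refine lintegral_congr fun x => ?_
      rw [lintegral_indicator (measurable_cube n x)]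
      exact hGrep x
    have heq2 : ∀ z, (∫⁻ x in B2ε, (dyadicCubeOf d n x).indicator G z)
        = G z * volume (B2ε ∩ dyadicCubeOf d n z) := by
      intro z
      have hpt2 : ∀ x, (dyadicCubeOf d n x).indicator G z
          = (dyadicCubeOf d n z).indicator (fun _ => G z) x := by
        intro x
        by_cases h : z ∈ dyadicCubeOf d n x
        · rw [Set.indicator_of_mem h, Set.indicator_of_mem (mem_cube_comm.1 h)]
        · rw [Set.indicator_of_notMem h,
            Set.indicator_of_notMem (fun hc => h (mem_cube_comm.2 hc))]
      calc (∫⁻ x in B2ε, (dyadicCubeOf d n x).indicator G z)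
          = ∫⁻ x in B2ε, (dyadicCubeOf d n z).indicator (fun _ => G z) x :=
            lintegral_congr fun x => hpt2 x
        _ = ∫⁻ x in dyadicCubeOf d n z, G z ∂(volume.restrict B2ε) := by
            rw [lintegral_indicator (measurable_cube n z)]
        _ = G z * (volume.restrict B2ε) (dyadicCubeOf d n z) := setLIntegral_const _ _
        _ = G z * volume (B2ε ∩ dyadicCubeOf d n z) := by
            rw [Measure.restrict_apply (measurable_cube n z), Set.inter_comm]
    calc ∫⁻ x in B2ε, G x
        = w⁻¹ * ∫⁻ z, G z * volume (B2ε ∩ dyadicCubeOf d n z) := by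
          rw [heq1]; congr 1; exact lintegral_congr heq2
      _ ≤ w⁻¹ * ∫⁻ z, G z * ((d : ℝ≥0∞) * (ENNReal.ofReal (2*(2*ε)) * w)) := by
          refine mul_le_mul' le_rfl (lintegral_mono fun z => ?_)
          exact mul_le_mul' le_rfl (volume_bad_inter_cube n (2*ε) (by positivity) z)
      _ = w⁻¹ * (((d : ℝ≥0∞) * (ENNReal.ofReal (2*(2*ε)) * w)) * ∫⁻ z, G z) := by
          rw [lintegral_mul_const _ hGmeas]
          ring
      _ = (d : ℝ≥0∞) * ENNReal.ofReal (2*(2*ε)) * ∫⁻ z, G z := by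
          rw [← mul_assoc]
          congr 1
          calc w⁻¹ * ((d : ℝ≥0∞) * (ENNReal.ofReal (2*(2*ε)) * w))
              = (d : ℝ≥0∞) * ENNReal.ofReal (2*(2*ε)) * (w⁻¹ * w) := by ring
            _ = (d : ℝ≥0∞) * ENNReal.ofReal (2*(2*ε)) := by
                rw [ENNReal.inv_mul_cancel hw0 hwtop, mul_one]
  -- assemble
  have hBsub : Bε ⊆ B2ε := badSet_mono (by linarith)
  calc eLpNorm (fun x => ballAvg d k g x - g x) 2 volume ^ 2
      = ∫⁻ x, ENNReal.ofReal ((ballAvg d k g x - g x) ^ 2) := eLpNorm_two_sq _ _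
    _ ≤ ∫⁻ x, Bε.indicator (fun x => 2 * (v⁻¹ * K x + G x)) x := lintegral_mono hpt
    _ = ∫⁻ x in Bε, 2 * (v⁻¹ * K x + G x) :=
        lintegral_indicator (measurable_badSet d n ε) _
    _ = 2 * (v⁻¹ * (∫⁻ x in Bε, K x) + ∫⁻ x in Bε, G x) := by
        rw [lintegral_const_mul 2 (f := fun x => v⁻¹ * K x + G x) ((hKmeas.const_mul v⁻¹).add hGmeas),
          lintegral_add_left (hKmeas.const_mul v⁻¹),
          lintegral_const_mul v⁻¹ hKmeas]
    _ ≤ 2 * (v⁻¹ * (v * ∫⁻ z in B2ε, G z) + ∫⁻ x in B2ε, G x) :=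
        mul_le_mul' le_rfl (add_le_add (mul_le_mul' le_rfl hT1) (lintegral_mono_set (μ := volume) (f := G) hBsub))
    _ = 4 * ∫⁻ x in B2ε, G x := by
        rw [← mul_assoc, ENNReal.inv_mul_cancel hv0 hvtop, one_mul]
        ring
    _ ≤ 4 * ((d : ℝ≥0∞) * ENNReal.ofReal (2*(2*ε)) * ∫⁻ z, G z) :=
        mul_le_mul' le_rfl hT2
    _ ≤ ENNReal.ofReal (16 * ((d:ℝ) + 1) * ε) * ∫⁻ z, G z := by
        rw [← mul_assoc, ← mul_assoc]
        refine mul_le_mul' ?_ le_rfl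
        calc (4:ℝ≥0∞) * (d : ℝ≥0∞) * ENNReal.ofReal (2*(2*ε))
            = ENNReal.ofReal 4 * ENNReal.ofReal (d:ℝ) * ENNReal.ofReal (2*(2*ε)) := by
              rw [ENNReal.ofReal_ofNat, ENNReal.ofReal_natCast]
          _ = ENNReal.ofReal (4 * (d:ℝ) * (2*(2*ε))) := by
              rw [← ENNReal.ofReal_mul (by norm_num), ← ENNReal.ofReal_mul (by positivity)]
          _ ≤ ENNReal.ofReal (16 * ((d:ℝ) + 1) * ε) := by
              refine ENNReal.ofReal_le_ofReal ?_
              nlinarith [hε0.le]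
    _ = ENNReal.ofReal (16 * ((d:ℝ) + 1) * ε) * eLpNorm g 2 volume ^ 2 := by
        rw [eLpNorm_two_sq]
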